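/- Let W be a second-order working set selection, let (α^(t))_{t ∈ ℕ} be a sequence in R such that (f(α^(t)))_{t ∈ ℕ} is monotonically increasing, let c > 0, and suppose there is an infinite set T ⊆ ℕ such that for every t ∈ T with α^(t−1) ∉ R* one has f(α^(t)) − f(α^(t−1)) ≥ c · g̃_W(α^(t−1)) (inequality in [0, ∞]; in particular g̃_W(α^(t−1)) is then finite). Then lim_{t→∞} f(α^(t)) = f*. -/

import Mathlib

open Matrix Filter Topology ENNReal

namespace SMO

noncomputable section

variable {l : ℕ}

/-- The dual SVM objective `f(α) = yᵀα − (1/2) αᵀKα`. -/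
def obj (y : Fin l → ℝ) (K : Matrix (Fin l) (Fin l) ℝ) (α : Fin l → ℝ) : ℝ :=
  y ⬝ᵥ α - (1 / 2) * (α ⬝ᵥ (K *ᵥ α))

/-- The gradient `∇f(α) = y − Kα`. -/
def grad (y : Fin l → ℝ) (K : Matrix (Fin l) (Fin l) ℝ) (α : Fin l → ℝ) : Fin l → ℝ :=
  y - K *ᵥ α

/-- The direction `v_B = e_i − e_j` of a working set `B = (i, j)`. -/
def dir (B : Fin l × Fin l) : Fin l → ℝ :=
  Pi.single B.1 1 - Pi.single B.2 1

/-- Lower bound `L_i = min {0, y_i C}`. -/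
def lb (y : Fin l → ℝ) (C : ℝ) (i : Fin l) : ℝ := min 0 (y i * C)

/-- Upper bound `U_i = max {0, y_i C}`. -/
def ub (y : Fin l → ℝ) (C : ℝ) (i : Fin l) : ℝ := max 0 (y i * C)

/-- The feasible region `R`. -/
def feas (y : Fin l → ℝ) (C : ℝ) : Set (Fin l → ℝ) :=
  {α | (∑ i, α i) = 0 ∧ ∀ i, lb y C i ≤ α i ∧ α i ≤ ub y C i}

/-- `I_up(α) = {i : α_i < U_i}`. -/
def Iup (y : Fin l → ℝ) (C : ℝ) (α : Fin l → ℝ) : Set (Fin l) := {i | α i < ub y C i}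

/-- `I_down(α) = {i : α_i > L_i}`. -/
def Idown (y : Fin l → ℝ) (C : ℝ) (α : Fin l → ℝ) : Set (Fin l) := {i | lb y C i < α i}

/-- The set `B(α)` of working sets feasible at `α`. -/
def wsets (y : Fin l → ℝ) (C : ℝ) (α : Fin l → ℝ) : Set (Fin l × Fin l) :=
  {B | B.1 ∈ Iup y C α ∧ B.2 ∈ Idown y C α ∧ B.1 ≠ B.2}

/-- The optimal value `f* = max {f(α) : α ∈ R}`. -/
def fstar (y : Fin l → ℝ) (K : Matrix (Fin l) (Fin l) ℝ) (C : ℝ) : ℝ :=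
  sSup (obj y K '' feas y C)

/-- The optimal set `R* = {α ∈ R : f(α) = f*}`. -/
def opt (y : Fin l → ℝ) (K : Matrix (Fin l) (Fin l) ℝ) (C : ℝ) : Set (Fin l → ℝ) :=
  {α ∈ feas y C | obj y K α = fstar y K C}

/-- The gap function `ψ(α) = max {v_Bᵀ ∇f(α) : B ∈ B(α)}`. -/
def psi (y : Fin l → ℝ) (K : Matrix (Fin l) (Fin l) ℝ) (C : ℝ) (α : Fin l → ℝ) : ℝ :=
  sSup ((fun B => dir B ⬝ᵥ grad y K α) '' wsets y C α)

/-- The Newton-step gain `g̃_B(α) = (v_Bᵀ∇f(α))² / (2 v_BᵀKv_B) ∈ [0, ∞]`, with the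
conventions `g̃_B(α) = 0` if `v_BᵀKv_B = 0` and `v_Bᵀ∇f(α) = 0`, and `g̃_B(α) = ∞` if
`v_BᵀKv_B = 0` and `v_Bᵀ∇f(α) ≠ 0`. -/
def ngain (y : Fin l → ℝ) (K : Matrix (Fin l) (Fin l) ℝ) (B : Fin l × Fin l)
    (α : Fin l → ℝ) : ℝ≥0∞ :=
  if dir B ⬝ᵥ (K *ᵥ dir B) = 0 then
    (if dir B ⬝ᵥ grad y K α = 0 then 0 else ⊤)
  else ENNReal.ofReal ((dir B ⬝ᵥ grad y K α) ^ 2 / (2 * (dir B ⬝ᵥ (K *ᵥ dir B))))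

/-- A second-order working set selection: on every non-optimal feasible `α` it returns a
working set `W(α) = (i, j) ∈ B(α)` such that `i` maximizes `(∇f(α))_n` over `n ∈ I_up(α)`
and `j` maximizes `g̃_{(i,n)}(α)` over `n ∈ I_down(α) \ {i}`. -/
def IsSecondOrderWSS (y : Fin l → ℝ) (K : Matrix (Fin l) (Fin l) ℝ) (C : ℝ)
    (W : (Fin l → ℝ) → Fin l × Fin l) : Prop :=
  ∀ α ∈ feas y C \ opt y K C,
    W α ∈ wsets y C α ∧
    (∀ n ∈ Iup y C α, grad y K α n ≤ grad y K α (W α).1) ∧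
    (∀ n ∈ Idown y C α, n ≠ (W α).1 → ngain y K ((W α).1, n) α ≤ ngain y K (W α) α)


/-! ### Auxiliary lemmas -/

lemma dir_dot (B : Fin l × Fin l) (g : Fin l → ℝ) : dir B ⬝ᵥ g = g B.1 - g B.2 := by
  simp [dir, sub_dotProduct, single_dotProduct]

lemma symm_dot {K : Matrix (Fin l) (Fin l) ℝ} (hK : Kᵀ = K) (x z : Fin l → ℝ) :
    x ⬝ᵥ (K *ᵥ z) = z ⬝ᵥ (K *ᵥ x) := by
  rw [Matrix.dotProduct_mulVec, ← Matrix.vecMul_transpose, hK, dotProduct_comm]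

lemma obj_add (y : Fin l → ℝ) {K : Matrix (Fin l) (Fin l) ℝ} (hK : Kᵀ = K)
    (α d : Fin l → ℝ) :
    obj y K (α + d) = obj y K α + d ⬝ᵥ grad y K α - (1/2) * (d ⬝ᵥ (K *ᵥ d)) := by
  have h := symm_dot hK d α
  have h2 := dotProduct_comm d y
  simp only [obj, grad, Matrix.mulVec_add, dotProduct_add, add_dotProduct,
    dotProduct_sub] at *
  linarith

lemma obj_cont (y : Fin l → ℝ) (K : Matrix (Fin l) (Fin l) ℝ) : Continuous (obj y K) := by
  unfold obj dotProduct Matrix.mulVec dotProduct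
  simp only []
  fun_prop

lemma grad_cont (y : Fin l → ℝ) (K : Matrix (Fin l) (Fin l) ℝ) (i : Fin l) :
    Continuous fun α => grad y K α i := by
  simp only [grad, Matrix.mulVec, dotProduct, Pi.sub_apply]
  fun_prop

lemma feas_eq (y : Fin l → ℝ) (C : ℝ) :
    feas y C = {α : Fin l → ℝ | (∑ i, α i) = 0} ∩
      Set.pi Set.univ (fun i => Set.Icc (lb y C i) (ub y C i)) := by
  ext α
  simp only [feas, Set.mem_setOf_eq, Set.mem_inter_iff, Set.mem_pi, Set.mem_univ,
    Set.mem_Icc, forall_const]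

lemma feas_compact (y : Fin l → ℝ) (C : ℝ) : IsCompact (feas y C) := by
  have hclosed : IsClosed (feas y C) := by
    rw [feas_eq]
    exact (isClosed_eq (by fun_prop) continuous_const).inter
      (isClosed_set_pi fun i _ => isClosed_Icc)
  have hsub : feas y C ⊆ Set.pi Set.univ (fun i => Set.Icc (lb y C i) (ub y C i)) := by
    rw [feas_eq]; exact Set.inter_subset_right
  exact (isCompact_univ_pi fun i => isCompact_Icc).of_isClosed_subset hclosed hsub

lemma zero_mem_feas (y : Fin l → ℝ) (C : ℝ) : (0 : Fin l → ℝ) ∈ feas y C := by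
  refine ⟨by simp, fun i => ⟨?_, ?_⟩⟩ <;> simp [lb, ub, min_le_iff, le_max_iff]

lemma exists_opt (y : Fin l → ℝ) (K : Matrix (Fin l) (Fin l) ℝ) (C : ℝ) :
    ∃ αs ∈ feas y C, (obj y K αs = fstar y K C) ∧ ∀ β ∈ feas y C, obj y K β ≤ obj y K αs := by
  obtain ⟨αs, hmem, hmax⟩ := (feas_compact y C).exists_isMaxOn ⟨0, zero_mem_feas y C⟩
    (obj_cont y K).continuousOn
  have hub : ∀ β ∈ feas y C, obj y K β ≤ obj y K αs := fun β hβ => hmax hβ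
  refine ⟨αs, hmem, ?_, hub⟩
  have : IsGreatest (obj y K '' feas y C) (obj y K αs) :=
    ⟨⟨αs, hmem, rfl⟩, by rintro _ ⟨β, hβ, rfl⟩; exact hub β hβ⟩
  exact (this.csSup_eq).symm

lemma posSemidef_symm {K : Matrix (Fin l) (Fin l) ℝ} (hK : K.PosSemidef) : Kᵀ = K := by
  have := hK.isHermitian
  rwa [Matrix.IsHermitian, Matrix.conjTranspose_eq_transpose_of_trivial] at this

lemma exists_violating {y : Fin l → ℝ} {K : Matrix (Fin l) (Fin l) ℝ} {C : ℝ}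
    (hK : K.PosSemidef) {α : Fin l → ℝ} (hα : α ∈ feas y C)
    (hlt : obj y K α < fstar y K C) :
    ∃ i j, α i < ub y C i ∧ lb y C j < α j ∧ grad y K α j < grad y K α i := by
  obtain ⟨αs, hs, hfs, -⟩ := exists_opt y K C
  set d : Fin l → ℝ := αs - α with hd
  set g : Fin l → ℝ := grad y K α with hg
  have hexp : obj y K αs = obj y K α + d ⬝ᵥ g - (1/2) * (d ⬝ᵥ (K *ᵥ d)) := by
    have := obj_add y (posSemidef_symm hK) α d
    rw [hd] at this ⊢
    simpa using this
  have hq : 0 ≤ d ⬝ᵥ (K *ᵥ d) := by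
    have := hK.dotProduct_mulVec_nonneg d
    simpa using this
  have hdg : 0 < d ⬝ᵥ g := by rw [hfs] at hexp; linarith
  have hdg' : 0 < ∑ i, d i * g i := hdg
  have hsum0 : ∑ i, d i = 0 := by
    rw [hd]
    simp only [Pi.sub_apply, Finset.sum_sub_distrib, hs.1, hα.1, sub_zero]
  have hPex : ∃ i, 0 < d i := by
    by_contra hno
    push_neg at hno
    have hz : ∀ i ∈ Finset.univ, d i = 0 := by
      intro i _
      have := (Finset.sum_eq_zero_iff_of_nonpos (fun i _ => hno i)).mp hsum0
      exact this i (Finset.mem_univ i)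
    have : ∑ i, d i * g i = 0 :=
      Finset.sum_eq_zero fun i hi => by rw [hz i hi, zero_mul]
    linarith
  have hNex : ∃ j, d j < 0 := by
    by_contra hno
    push_neg at hno
    have hz : ∀ i ∈ Finset.univ, d i = 0 := by
      intro i _
      have := (Finset.sum_eq_zero_iff_of_nonneg (fun i _ => hno i)).mp hsum0
      exact this i (Finset.mem_univ i)
    have : ∑ i, d i * g i = 0 :=
      Finset.sum_eq_zero fun i hi => by rw [hz i hi, zero_mul]
    linarith
  classical
  set P : Finset (Fin l) := Finset.univ.filter fun i => 0 < d i with hP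
  set N : Finset (Fin l) := Finset.univ.filter fun i => d i < 0 with hN
  have hPne : P.Nonempty := hPex.imp fun i hi => by simp [hP, hi]
  have hNne : N.Nonempty := hNex.imp fun i hi => by simp [hN, hi]
  obtain ⟨i0, hi0P, hi0max⟩ := P.exists_max_image g hPne
  obtain ⟨j0, hj0N, hj0min⟩ := N.exists_min_image g hNne
  have hdi0 : 0 < d i0 := by simpa [hP] using hi0P
  have hdj0 : d j0 < 0 := by simpa [hN] using hj0N
  refine ⟨i0, j0, ?_, ?_, ?_⟩
  · have h2 : α i0 < αs i0 := by
      have : d i0 = αs i0 - α i0 := rfl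
      linarith [hdi0]
    linarith [(hs.2 i0).2]
  · have h2 : αs j0 < α j0 := by
      have : d j0 = αs j0 - α j0 := rfl
      linarith [hdj0]
    linarith [(hs.2 j0).1]
  · by_contra hcon
    push_neg at hcon
    set m := g j0
    have hle : ∀ i ∈ Finset.univ, d i * g i ≤ d i * m := by
      intro i _
      rcases lt_trichotomy (d i) 0 with h | h | h
      · have hiN : i ∈ N := by simp [hN, h]
        exact mul_le_mul_of_nonpos_left (hj0min i hiN) h.le
      · simp [h]
      · have hiP : i ∈ P := by simp [hP, h]
        exact mul_le_mul_of_nonneg_left ((hi0max i hiP).trans hcon) h.le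
    have hsle : ∑ i, d i * g i ≤ ∑ i, d i * m := Finset.sum_le_sum hle
    rw [← Finset.sum_mul, hsum0, zero_mul] at hsle
    linarith

/-- If `(f(α^(t)))` is monotonically increasing, `c > 0`, and there is an
infinite set `T ⊆ ℕ` such that for every `t ∈ T` with `α^(t) ∉ R*` the step to `α^(t+1)`
gains at least `c · g̃_W(α^(t))` (inequality in `[0, ∞]`), then `f(α^(t)) → f*`. -/
theorem convergence_theorem
    (hl : 2 ≤ l) (y : Fin l → ℝ) (hy : ∀ i, y i = 1 ∨ y i = -1)
    (K : Matrix (Fin l) (Fin l) ℝ) (hK : K.PosSemidef) (C : ℝ) (hC : 0 < C)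
    (W : (Fin l → ℝ) → Fin l × Fin l) (hW : IsSecondOrderWSS y K C W)
    (a : ℕ → Fin l → ℝ) (ha : ∀ t, a t ∈ feas y C)
    (hmono : Monotone fun t => obj y K (a t))
    (c : ℝ) (hc : 0 < c) (T : Set ℕ) (hT : T.Infinite)
    (hstep : ∀ t ∈ T, a t ∉ opt y K C →
      ENNReal.ofReal c * ngain y K (W (a t)) (a t) ≤
        ENNReal.ofReal (obj y K (a (t + 1)) - obj y K (a t))) :
    Tendsto (fun t => obj y K (a t)) atTop (𝓝 (fstar y K C))  := by
  classical
  obtain ⟨αs, hαs, hfs, hubnd⟩ := exists_opt y K C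
  have hle : ∀ t, obj y K (a t) ≤ fstar y K C := fun t => hfs ▸ hubnd _ (ha t)
  have hbdd : BddAbove (Set.range fun t => obj y K (a t)) :=
    ⟨fstar y K C, by rintro _ ⟨t, rfl⟩; exact hle t⟩
  have htendL : Tendsto (fun t => obj y K (a t)) atTop (𝓝 (⨆ t, obj y K (a t))) :=
    tendsto_atTop_ciSup hmono hbdd
  set L := ⨆ t, obj y K (a t) with hL
  have hLle : L ≤ fstar y K C := ciSup_le hle
  rcases eq_or_lt_of_le hLle with heq | hlt
  · rwa [heq] at htendL
  · exfalso
    have hleL : ∀ t, obj y K (a t) ≤ L := fun t => le_ciSup hbdd t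
    have hnopt : ∀ t, a t ∉ opt y K C := by
      intro t hmem
      have h1 := hmem.2
      have h2 := hleL t
      rw [h1] at h2
      linarith
    set t : ℕ → ℕ := Nat.nth (· ∈ T) with ht
    have htmono : StrictMono t := Nat.nth_strictMono hT
    have htmem : ∀ n, t n ∈ T := fun n => Nat.nth_mem_of_infinite hT n
    obtain ⟨β, hβfeas, φ, hφ, hconv⟩ := (feas_compact y C).tendsto_subseq (fun n => ha (t n))
    have htop : Tendsto (fun k => t (φ k)) atTop atTop := (htmono.comp hφ).tendsto_atTop
    have hobjβ : obj y K β = L := by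
      have h1 : Tendsto (fun k => obj y K (a (t (φ k)))) atTop (𝓝 (obj y K β)) :=
        ((obj_cont y K).tendsto β).comp hconv
      have h2 : Tendsto (fun k => obj y K (a (t (φ k)))) atTop (𝓝 L) := htendL.comp htop
      exact tendsto_nhds_unique h1 h2
    obtain ⟨i, j, hiup, hjdown, hgij⟩ := exists_violating hK hβfeas (by rw [hobjβ]; exact hlt)
    set δ := grad y K β i - grad y K β j with hδ
    have hδpos : 0 < δ := sub_pos.mpr hgij
    have hqnonneg : ∀ B : Fin l × Fin l, 0 ≤ dir B ⬝ᵥ (K *ᵥ dir B) := fun B => by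
      simpa using hK.dotProduct_mulVec_nonneg (dir B)
    set M : ℝ := 1 + ∑ B : Fin l × Fin l, dir B ⬝ᵥ (K *ᵥ dir B) with hM
    have hMsum : 0 ≤ ∑ B : Fin l × Fin l, dir B ⬝ᵥ (K *ᵥ dir B) :=
      Finset.sum_nonneg fun B _ => hqnonneg B
    have hMpos : 0 < M := by rw [hM]; linarith
    have hqM : ∀ B : Fin l × Fin l, dir B ⬝ᵥ (K *ᵥ dir B) ≤ M := by
      intro B
      have := Finset.single_le_sum (fun B _ => hqnonneg B) (Finset.mem_univ B)
      rw [hM]; linarith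
    set ε : ℝ := δ ^ 2 / 4 / (2 * M) with hε
    have hεpos : 0 < ε := by positivity
    -- eventual facts along the subsequence
    have E1 : ∀ᶠ k in atTop, a (t (φ k)) i < ub y C i :=
      (((continuous_apply i).tendsto β).comp hconv).eventually_lt_const hiup
    have E2 : ∀ᶠ k in atTop, lb y C j < a (t (φ k)) j :=
      (((continuous_apply j).tendsto β).comp hconv).eventually_const_lt hjdown
    have E3 : ∀ᶠ k in atTop,
        δ / 2 < grad y K (a (t (φ k))) i - grad y K (a (t (φ k))) j := by
      have hgi : Tendsto (fun k => grad y K (a (t (φ k))) i) atTop (𝓝 (grad y K β i)) :=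
        ((grad_cont y K i).tendsto β).comp hconv
      have hgj : Tendsto (fun k => grad y K (a (t (φ k))) j) atTop (𝓝 (grad y K β j)) :=
        ((grad_cont y K j).tendsto β).comp hconv
      exact (hgi.sub hgj).eventually_const_lt (by linarith)
    have E4 : ∀ᶠ k in atTop,
        obj y K (a (t (φ k) + 1)) - obj y K (a (t (φ k))) < c * ε := by
      have hgain0 : Tendsto (fun n => obj y K (a (n + 1)) - obj y K (a n)) atTop (𝓝 0) := by
        have := (htendL.comp (tendsto_add_atTop_nat 1)).sub htendL
        simpa using this
      exact (hgain0.comp htop).eventually_lt_const (by positivity)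
    obtain ⟨k, ⟨⟨h1k, h2k⟩, h3k⟩, h4k⟩ := (((E1.and E2).and E3).and E4).exists
    set α : Fin l → ℝ := a (t (φ k)) with hα
    obtain ⟨hWmem, hmax1, hmax2⟩ := hW α ⟨ha _, hnopt _⟩
    have hIup : i ∈ Iup y C α := h1k
    have hg1 : grad y K α i ≤ grad y K α (W α).1 := hmax1 i hIup
    have hs2 : δ / 2 < grad y K α (W α).1 - grad y K α j := by
      have := h3k
      linarith
    have hjne : j ≠ (W α).1 := by
      intro h
      rw [← h] at hs2
      linarith
    have hjdownk : j ∈ Idown y C α := h2k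
    have hgain : ngain y K ((W α).1, j) α ≤ ngain y K (W α) α := hmax2 j hjdownk hjne
    have hsval : dir ((W α).1, j) ⬝ᵥ grad y K α = grad y K α (W α).1 - grad y K α j :=
      dir_dot _ _
    have hlow : ENNReal.ofReal ε ≤ ngain y K ((W α).1, j) α := by
      unfold ngain
      split_ifs with hq0 hs0
      · exfalso; rw [hsval] at hs0; linarith
      · exact le_top
      · apply ENNReal.ofReal_le_ofReal
        rw [hsval]
        have hqpos : 0 < dir ((W α).1, j) ⬝ᵥ (K *ᵥ dir ((W α).1, j)) :=
          (hqnonneg _).lt_of_ne (Ne.symm hq0)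
        have hsq : δ ^ 2 / 4 ≤ (grad y K α (W α).1 - grad y K α j) ^ 2 := by nlinarith
        have hqMk := hqM ((W α).1, j)
        calc ε = δ ^ 2 / 4 / (2 * M) := hε
          _ ≤ (grad y K α (W α).1 - grad y K α j) ^ 2 /
              (2 * (dir ((W α).1, j) ⬝ᵥ (K *ᵥ dir ((W α).1, j)))) :=
            div_le_div₀ (sq_nonneg _) hsq (by linarith) (by linarith)
    have hεle : ENNReal.ofReal ε ≤ ngain y K (W α) α := hlow.trans hgain
    have hstepk := hstep (t (φ k)) (htmem _) (hnopt _)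
    have hkey : ENNReal.ofReal (c * ε) ≤
        ENNReal.ofReal (obj y K (a (t (φ k) + 1)) - obj y K (a (t (φ k)))) := by
      rw [ENNReal.ofReal_mul hc.le]
      exact le_trans (mul_le_mul' le_rfl hεle) hstepk
    have hltk : ENNReal.ofReal (obj y K (a (t (φ k) + 1)) - obj y K (a (t (φ k)))) <
        ENNReal.ofReal (c * ε) :=
      (ENNReal.ofReal_lt_ofReal_iff (by positivity)).mpr h4k
    exact absurd (hkey.trans_lt hltk) (lt_irrefl _)


end

end SMO
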